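/- Let W be a graphon with ∫∫ W(x,y) dx dy = p. If t(C_4, W) = p^4, then W(x,y) = p for almost every (x,y) ∈ [0,1]^2, where t(C_4, W) = ∫_{[0,1]^4} W(a,b)W(b,c)W(c,d)W(d,a) da db dc dd. -/

import Mathlib

open MeasureTheory Finset

/-- Lebesgue measure restricted to `[0,1]`. -/
noncomputable def μ01 : Measure ℝ := volume.restrict (Set.Icc 0 1)

/-- Product measure on `V → ℝ`, each coordinate uniform on `[0,1]`. -/
noncomputable def πμ (V : Type*) [Fintype V] : Measure (V → ℝ) :=
  Measure.pi fun _ => μ01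

/-- `W` is a graphon: symmetric, measurable, with values in `[0,1]`. -/
def IsGraphon (W : ℝ → ℝ → ℝ) : Prop :=
  Measurable (Function.uncurry W) ∧ (∀ x y, W x y = W y x) ∧
    ∀ x y, W x y ∈ Set.Icc (0 : ℝ) 1

/-- Value of `W` on an unordered pair of vertices (for symmetric `W` this is
just `W (x i) (x j)` on the edge `{i, j}`). -/
noncomputable def edgeVal (W : ℝ → ℝ → ℝ) {V : Type*} (x : V → ℝ) : Sym2 V → ℝ :=
  Sym2.lift ⟨fun i j => (W (x i) (x j) + W (x j) (x i)) / 2,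
    fun i j => by simp [add_comm]⟩

/-- `∏_{{i,j} ∈ s} W(x_i, x_j)` for a finite set `s` of unordered pairs. -/
noncomputable def prodEdges (W : ℝ → ℝ → ℝ) {V : Type*} (s : Finset (Sym2 V))
    (x : V → ℝ) : ℝ :=
  ∏ e ∈ s, edgeVal W x e

/-- Homomorphism density of the graph on `V` with edge set `s` in `W`. -/
noncomputable def homDensitySet {V : Type*} [Fintype V] (s : Finset (Sym2 V))
    (W : ℝ → ℝ → ℝ) : ℝ :=
  ∫ x : V → ℝ, prodEdges W s x ∂(πμ V)

/-- Homomorphism density `t(F, W)`. -/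
noncomputable def homDensity {V : Type*} [Fintype V] (F : SimpleGraph V)
    [Fintype F.edgeSet] (W : ℝ → ℝ → ℝ) : ℝ :=
  homDensitySet F.edgeFinset W

/-- `𝔾(G, W)(F)`: the probability that sampling along `G` from `W` yields the
edge-subgraph of `G` with edge set `s`. -/
noncomputable def sampleProb {V : Type*} [Fintype V] [DecidableEq V]
    (G : SimpleGraph V) [Fintype G.edgeSet] (W : ℝ → ℝ → ℝ)
    (s : Finset (Sym2 V)) : ℝ :=
  ∫ x : V → ℝ,
    (∏ e ∈ s, edgeVal W x e) * ∏ e ∈ G.edgeFinset \ s, (1 - edgeVal W x e) ∂(πμ V)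

/-- `ℕ(G, W)(k)`: probability that the `W`-sample along `G` has exactly `k` edges. -/
noncomputable def edgeCountDist {V : Type*} [Fintype V] [DecidableEq V]
    (G : SimpleGraph V) [Fintype G.edgeSet] (W : ℝ → ℝ → ℝ) (k : ℕ) : ℝ :=
  ∑ s ∈ G.edgeFinset.powerset.filter (fun s => s.card = k), sampleProb G W s

/-- `E[t(G_k, W)]` where `G_k` is a uniformly random `k`-edge subgraph of `G`. -/
noncomputable def avgSubDensity {V : Type*} [Fintype V] [DecidableEq V]
    (G : SimpleGraph V) [Fintype G.edgeSet] (W : ℝ → ℝ → ℝ) (k : ℕ) : ℝ :=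
  ((G.edgeFinset.card.choose k : ℝ))⁻¹ *
    ∑ s ∈ G.edgeFinset.powerset.filter (fun s => s.card = k), homDensitySet s W

/-- `G` contains a `4`-cycle. -/
def ContainsC4 {V : Type*} (G : SimpleGraph V) : Prop :=
  ∃ a b c d : V, a ≠ b ∧ a ≠ c ∧ a ≠ d ∧ b ≠ c ∧ b ≠ d ∧ c ≠ d ∧
    G.Adj a b ∧ G.Adj b c ∧ G.Adj c d ∧ G.Adj d a

instance : IsProbabilityMeasure μ01 :=
  ⟨by simp [μ01, Real.volume_Icc]⟩

lemma bddInt {α : Type*} [MeasurableSpace α] {μ : Measure α} [IsFiniteMeasure μ]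
    {f : α → ℝ} (hf : AEStronglyMeasurable f μ) {C : ℝ} (h : ∀ x, |f x| ≤ C) :
    Integrable f μ :=
  ⟨hf, HasFiniteIntegral.of_bounded (C := C)
    (Filter.Eventually.of_forall (by simpa [Real.norm_eq_abs] using h))⟩

lemma swap_bdd {ν₁ ν₂ : Measure ℝ} [IsFiniteMeasure ν₁] [IsFiniteMeasure ν₂]
    {F : ℝ → ℝ → ℝ} (hF : Measurable (Function.uncurry F)) {C : ℝ}
    (hb : ∀ x y, |F x y| ≤ C) :
    ∫ a, ∫ b, F a b ∂ν₂ ∂ν₁ = ∫ b, ∫ a, F a b ∂ν₁ ∂ν₂ :=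
  integral_integral_swap (bddInt hF.aestronglyMeasurable (fun z => hb z.1 z.2))

lemma var_lemma {α : Type*} [MeasurableSpace α] {μ : Measure α} [IsProbabilityMeasure μ]
    {f : α → ℝ} (hf : AEStronglyMeasurable f μ) (hb : ∀ x, |f x| ≤ 1) :
    (∫ x, f x ∂μ) ^ 2 ≤ ∫ x, f x ^ 2 ∂μ ∧
      ((∫ x, f x ^ 2 ∂μ) = (∫ x, f x ∂μ) ^ 2 → f =ᵐ[μ] fun _ => ∫ x, f x ∂μ) := by
  set m := ∫ x, f x ∂μ with hm
  have hif : Integrable f μ := bddInt hf hb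
  have hsq : AEStronglyMeasurable (fun x => f x ^ 2) μ := by
    have h' : AEStronglyMeasurable (fun x => f x * f x) μ := hf.mul hf
    simpa [pow_two] using h'
  have hif2 : Integrable (fun x => f x ^ 2) μ :=
    bddInt hsq (C := 1) fun x => by
      rw [abs_pow]; exact pow_le_one₀ (abs_nonneg _) (hb x)
  have key : ∫ x, (f x - m) ^ 2 ∂μ = (∫ x, f x ^ 2 ∂μ) - m ^ 2 := by
    have h1 : (fun x => (f x - m) ^ 2) = fun x => f x ^ 2 - (2 * m) * f x + m ^ 2 :=
      funext fun x => by ring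
    have hA : Integrable (fun x => f x ^ 2 - 2 * m * f x) μ := hif2.sub (hif.const_mul _)
    rw [h1, integral_add hA (integrable_const _),
      integral_sub hif2 (hif.const_mul _), integral_const_mul, integral_const]
    simp [measure_univ]
    ring
  have hnn : 0 ≤ ∫ x, (f x - m) ^ 2 ∂μ := integral_nonneg fun x => sq_nonneg _
  constructor
  · linarith
  · intro h
    have h0 : ∫ x, (f x - m) ^ 2 ∂μ = 0 := by rw [key, h]; ring
    have hint : Integrable (fun x => (f x - m) ^ 2) μ := by
      have : (fun x => (f x - m) ^ 2) = fun x => f x ^ 2 - (2 * m) * f x + m ^ 2 :=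
        funext fun x => by ring
      rw [this]
      have hA : Integrable (fun x => f x ^ 2 - 2 * m * f x) μ := hif2.sub (hif.const_mul _)
      exact hA.add (integrable_const _)
    have := (integral_eq_zero_iff_of_nonneg (fun x => sq_nonneg (f x - m)) hint).mp h0
    filter_upwards [this] with x hx
    have : (f x - m) ^ 2 = 0 := hx
    have := pow_eq_zero_iff (n := 2) (by norm_num) |>.mp this
    linarith [sub_eq_zero.mp this]

noncomputable def degFn (W : ℝ → ℝ → ℝ) : ℝ → ℝ := fun a => ∫ y, W a y ∂μ01
noncomputable def gFn (W : ℝ → ℝ → ℝ) : ℝ → ℝ → ℝ := fun a c => ∫ b, W a b * W c b ∂μ01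

variable {W : ℝ → ℝ → ℝ} (hm : Measurable (Function.uncurry W))
  (hbd : ∀ x y, W x y ∈ Set.Icc (0:ℝ) 1)

section
include hm

lemma meas_slice (a : ℝ) : Measurable (W a) := hm.comp measurable_prodMk_left

lemma deg_sm : StronglyMeasurable (degFn W) :=
  StronglyMeasurable.integral_prod_right hm.stronglyMeasurable

lemma g_meas : StronglyMeasurable (fun z : ℝ × ℝ => gFn W z.1 z.2) := by
  have h : Measurable (fun q : (ℝ × ℝ) × ℝ => W q.1.1 q.2 * W q.1.2 q.2) :=
    (hm.comp ((measurable_fst.fst).prodMk measurable_snd)).mul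
      (hm.comp ((measurable_fst.snd).prodMk measurable_snd))
  exact StronglyMeasurable.integral_prod_right' h.stronglyMeasurable

include hbd

lemma deg_mem (a : ℝ) : degFn W a ∈ Set.Icc (0:ℝ) 1 := by
  constructor
  · exact integral_nonneg fun y => (hbd a y).1
  · have h := integral_mono (μ := μ01) (bddInt (meas_slice hm a).aestronglyMeasurable (C := 1)
      fun y => abs_le.mpr ⟨by linarith [(hbd a y).1], (hbd a y).2⟩)
      (integrable_const 1) fun y => (hbd a y).2
    simpa [degFn] using h

lemma g_mem (a c : ℝ) : gFn W a c ∈ Set.Icc (0:ℝ) 1 := by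
  constructor
  · exact integral_nonneg fun b => mul_nonneg (hbd a b).1 (hbd c b).1
  · have h := integral_mono (μ := μ01) (bddInt
      ((meas_slice hm a).mul (meas_slice hm c)).aestronglyMeasurable (C := 1) fun b => by
        rw [Pi.mul_apply, abs_mul]
        exact mul_le_one₀ (abs_le.mpr ⟨by linarith [(hbd a b).1], (hbd a b).2⟩) (abs_nonneg _)
          (abs_le.mpr ⟨by linarith [(hbd c b).1], (hbd c b).2⟩))
      (integrable_const 1) fun b => mul_le_one₀ (hbd a b).2 (hbd c b).1 (hbd c b).2
    simpa [gFn] using h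

end

section
variable {W : ℝ → ℝ → ℝ}

lemma C4_rw (hm : Measurable (Function.uncurry W)) (hsym : ∀ x y, W x y = W y x)
    (hbd : ∀ x y, W x y ∈ Set.Icc (0:ℝ) 1) :
    (∫ a, ∫ b, ∫ c, ∫ d, W a b * W b c * W c d * W d a ∂μ01 ∂μ01 ∂μ01 ∂μ01)
      = ∫ a, ∫ c, (gFn W a c) ^ 2 ∂μ01 ∂μ01 := by
  have hab : ∀ x y, |W x y| ≤ 1 := fun x y =>
    abs_le.mpr ⟨by linarith [(hbd x y).1], (hbd x y).2⟩
  have hgb : ∀ a c, |gFn W a c| ≤ 1 := fun a c =>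
    abs_le.mpr ⟨by linarith [(g_mem hm hbd a c).1], (g_mem hm hbd a c).2⟩
  have hgsym : ∀ a c, gFn W c a = gFn W a c := fun a c =>
    integral_congr_ae (.of_forall fun b => mul_comm _ _)
  have h1 : ∀ a b c, (∫ d, W a b * W b c * W c d * W d a ∂μ01)
      = W a b * W b c * gFn W c a := by
    intro a b c
    have he : (fun d => W a b * W b c * W c d * W d a)
        = fun d => (W a b * W b c) * (W c d * W a d) := by
      funext d; rw [hsym d a]; ring
    rw [he, integral_const_mul]
    rfl
  refine integral_congr_ae (.of_forall fun a => ?_)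
  have h2 : ∀ b, (∫ c, ∫ d, W a b * W b c * W c d * W d a ∂μ01 ∂μ01)
      = ∫ c, W a b * W b c * gFn W c a ∂μ01 :=
    fun b => integral_congr_ae (.of_forall fun c => h1 a b c)
  have hFm : Measurable (Function.uncurry fun b c => W a b * W b c * gFn W c a) := by
    have hg' : Measurable fun z : ℝ × ℝ => gFn W z.2 a :=
      (g_meas hm).measurable.comp (measurable_snd.prodMk measurable_const)
    exact (((meas_slice hm a).comp measurable_fst).mul
      (hm.comp (measurable_fst.prodMk measurable_snd))).mul hg'
  have hFb : ∀ b c, |W a b * W b c * gFn W c a| ≤ 1 := by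
    intro b c
    rw [abs_mul, abs_mul]
    exact mul_le_one₀ (mul_le_one₀ (hab a b) (abs_nonneg _) (hab b c)) (abs_nonneg _) (hgb c a)
  calc (∫ b, ∫ c, ∫ d, W a b * W b c * W c d * W d a ∂μ01 ∂μ01 ∂μ01)
      = ∫ b, ∫ c, W a b * W b c * gFn W c a ∂μ01 ∂μ01 :=
        integral_congr_ae (.of_forall h2)
    _ = ∫ c, ∫ b, W a b * W b c * gFn W c a ∂μ01 ∂μ01 := swap_bdd hFm hFb
    _ = ∫ c, (gFn W a c) ^ 2 ∂μ01 := by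
        refine integral_congr_ae (.of_forall fun c => ?_)
        dsimp only
        have he : (fun b => W a b * W b c * gFn W c a)
            = fun b => (W a b * W c b) * gFn W c a := by
          funext b; rw [hsym b c]
        rw [he, integral_mul_const, hgsym, pow_two]
        rfl

lemma gsum_rw (hm : Measurable (Function.uncurry W)) (hsym : ∀ x y, W x y = W y x)
    (hbd : ∀ x y, W x y ∈ Set.Icc (0:ℝ) 1) :
    (∫ a, ∫ c, gFn W a c ∂μ01 ∂μ01) = ∫ b, (degFn W b) ^ 2 ∂μ01 := by
  have hab : ∀ x y, |W x y| ≤ 1 := fun x y =>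
    abs_le.mpr ⟨by linarith [(hbd x y).1], (hbd x y).2⟩
  have hdb : ∀ b, |degFn W b| ≤ 1 := fun b =>
    abs_le.mpr ⟨by linarith [(deg_mem hm hbd b).1], (deg_mem hm hbd b).2⟩
  have hdeg' : ∀ b, (∫ c, W c b ∂μ01) = degFn W b := fun b =>
    integral_congr_ae (.of_forall fun c => hsym c b)
  calc (∫ a, ∫ c, gFn W a c ∂μ01 ∂μ01)
      = ∫ a, ∫ b, W a b * degFn W b ∂μ01 ∂μ01 := by
        refine integral_congr_ae (.of_forall fun a => ?_)
        have hFm : Measurable (Function.uncurry fun c b => W a b * W c b) :=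
          ((meas_slice hm a).comp measurable_snd).mul
            (hm.comp (measurable_fst.prodMk measurable_snd))
        have hswap := swap_bdd (ν₁ := μ01) (ν₂ := μ01) hFm
          (C := 1) (fun c b => by
            rw [abs_mul]; exact mul_le_one₀ (hab a b) (abs_nonneg _) (hab c b))
        calc (∫ c, gFn W a c ∂μ01) = ∫ c, ∫ b, W a b * W c b ∂μ01 ∂μ01 := rfl
          _ = ∫ b, ∫ c, W a b * W c b ∂μ01 ∂μ01 := hswap
          _ = ∫ b, W a b * degFn W b ∂μ01 := by
              refine integral_congr_ae (.of_forall fun b => ?_)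
              dsimp only
              rw [integral_const_mul, hdeg']
    _ = ∫ b, ∫ a, W a b * degFn W b ∂μ01 ∂μ01 := by
        refine swap_bdd ?_ (C := 1) (fun x y => by
          rw [abs_mul]; exact mul_le_one₀ (hab x y) (abs_nonneg _) (hdb y))
        exact (hm.comp (measurable_fst.prodMk measurable_snd)).mul
          ((deg_sm hm).measurable.comp measurable_snd)
    _ = ∫ b, (degFn W b) ^ 2 ∂μ01 := by
        refine integral_congr_ae (.of_forall fun b => ?_)
        dsimp only
        rw [integral_mul_const, hdeg', pow_two]
end

lemma abs_int_le_one {ν : Measure ℝ} [IsFiniteMeasure ν] {f : ℝ → ℝ}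
    (hν : ν Set.univ ≤ 1) (h : ∀ x, |f x| ≤ 1) : |∫ x, f x ∂ν| ≤ 1 := by
  have h1 := norm_integral_le_of_norm_le_const (μ := ν) (f := f) (C := 1)
    (Filter.Eventually.of_forall fun x => by rw [Real.norm_eq_abs]; exact h x)
  have h2 : (ν Set.univ).toReal ≤ 1 :=
    ENNReal.toReal_le_of_le_ofReal zero_le_one (by simpa using hν)
  rw [Real.norm_eq_abs, one_mul] at h1
  exact h1.trans h2

theorem stmt9' (W : ℝ → ℝ → ℝ)
    (hm : Measurable (Function.uncurry W)) (hsym : ∀ x y, W x y = W y x)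
    (hbd : ∀ x y, W x y ∈ Set.Icc (0:ℝ) 1) (p : ℝ)
    (hP1 : (∫ x, ∫ y, W x y ∂μ01 ∂μ01) = p)
    (hC4 : (∫ a, ∫ b, ∫ c, ∫ d, W a b * W b c * W c d * W d a
      ∂μ01 ∂μ01 ∂μ01 ∂μ01) = p ^ 4) :
    ∀ᵐ z ∂(μ01.prod μ01), W z.1 z.2 = p := by
  have hab : ∀ x y, |W x y| ≤ 1 := fun x y =>
    abs_le.mpr ⟨by linarith [(hbd x y).1], (hbd x y).2⟩
  have hdb : ∀ b, |degFn W b| ≤ 1 := fun b =>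
    abs_le.mpr ⟨by linarith [(deg_mem hm hbd b).1], (deg_mem hm hbd b).2⟩
  have hgb : ∀ a c, |gFn W a c| ≤ 1 := fun a c =>
    abs_le.mpr ⟨by linarith [(g_mem hm hbd a c).1], (g_mem hm hbd a c).2⟩
  have hP1' : (∫ a, degFn W a ∂μ01) = p := hP1
  have hp0 : 0 ≤ p := by
    rw [← hP1']; exact integral_nonneg fun a => (deg_mem hm hbd a).1
  have hp1 : p ≤ 1 := by
    rw [← hP1']
    have h := integral_mono (μ := μ01) (bddInt (deg_sm hm).aestronglyMeasurable (C := 1) hdb)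
      (integrable_const 1) fun a => (deg_mem hm hbd a).2
    simpa using h
  set P := μ01.prod μ01 with hP
  set G : ℝ × ℝ → ℝ := fun z => gFn W z.1 z.2 with hGdef
  have hGsm : StronglyMeasurable G := g_meas hm
  have hGb : ∀ z : ℝ × ℝ, |G z| ≤ 1 := fun z => hgb z.1 z.2
  have hGint : Integrable G P := bddInt hGsm.aestronglyMeasurable hGb
  have hG2sm : AEStronglyMeasurable (fun z => G z ^ 2) P := by
    have h := (hGsm.aestronglyMeasurable (μ := P)).mul (hGsm.aestronglyMeasurable (μ := P))
    have h' : AEStronglyMeasurable (fun z => G z * G z) P := h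
    simpa [pow_two] using h'
  have hG2int : Integrable (fun z => G z ^ 2) P := by
    refine bddInt hG2sm (C := 1) fun z => ?_
    rw [abs_pow]; exact pow_le_one₀ (abs_nonneg _) (hGb z)
  have hGP : (∫ z, G z ∂P) = ∫ a, ∫ c, gFn W a c ∂μ01 ∂μ01 := integral_prod _ hGint
  have hG2P : (∫ z, G z ^ 2 ∂P) = ∫ a, ∫ c, gFn W a c ^ 2 ∂μ01 ∂μ01 :=
    integral_prod _ hG2int
  set q := ∫ b, degFn W b ^ 2 ∂μ01 with hq
  have hq0 : 0 ≤ q := integral_nonneg fun b => sq_nonneg _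
  have hGq : (∫ z, G z ∂P) = q := by rw [hGP, gsum_rw hm hsym hbd]
  have hG2p4 : (∫ z, G z ^ 2 ∂P) = p ^ 4 := by
    rw [hG2P, ← C4_rw hm hsym hbd]; exact hC4
  have hvarG := var_lemma (μ := P) (hGsm.aestronglyMeasurable (μ := P)) hGb
  have hvard := var_lemma (μ := μ01) (deg_sm hm).aestronglyMeasurable hdb
  -- inequalities
  have h1 : q ^ 2 ≤ p ^ 4 := by
    have := hvarG.1; rw [hGq, hG2p4] at this; exact this
  have h2 : p ^ 2 ≤ q := by
    have := hvard.1; rw [hP1'] at this; exact this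
  have hqp : q = p ^ 2 := by nlinarith
  -- equality cases
  have hd_ae : degFn W =ᵐ[μ01] fun _ => p := by
    have h := hvard.2 (by rw [hP1', ← hq, hqp])
    rw [hP1'] at h; exact h
  have hG_ae : G =ᵐ[P] fun _ => p ^ 2 := by
    have h := hvarG.2 (by rw [hG2p4, hGq, hqp]; ring)
    rw [hGq, hqp] at h; exact h
  -- K function
  set K : ℝ → ℝ → ℝ := fun a c => ∫ b, (W a b - p) * (W c b - p) ∂μ01 with hKdef
  have hslice : ∀ a, Integrable (W a) μ01 := fun a =>
    bddInt (meas_slice hm a).aestronglyMeasurable (C := 1) (hab a)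
  have hK_eq : ∀ a c, K a c = gFn W a c - p * degFn W a - p * degFn W c + p ^ 2 := by
    intro a c
    have he : (fun b => (W a b - p) * (W c b - p))
        = fun b => W a b * W c b - p * W a b - p * W c b + p ^ 2 := funext fun b => by ring
    have hi1 : Integrable (fun b => W a b * W c b) μ01 :=
      bddInt ((meas_slice hm a).mul (meas_slice hm c)).aestronglyMeasurable (C := 1)
        fun b => by rw [abs_mul]; exact mul_le_one₀ (hab a b) (abs_nonneg _) (hab c b)
    have hi2 : Integrable (fun b => W a b * W c b - p * W a b) μ01 :=
      hi1.sub ((hslice a).const_mul _)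
    have hi3 : Integrable (fun b => W a b * W c b - p * W a b - p * W c b) μ01 :=
      hi2.sub ((hslice c).const_mul _)
    show (∫ b, (W a b - p) * (W c b - p) ∂μ01) = _
    rw [he, integral_add hi3 (integrable_const _), integral_sub hi2 ((hslice c).const_mul _),
      integral_sub hi1 ((hslice a).const_mul _), integral_const_mul, integral_const_mul,
      integral_const]
    simp [measure_univ]
    rfl
  have hK_ae : ∀ᵐ z ∂P, K z.1 z.2 = 0 := by
    have hdnull : μ01 {a | ¬ degFn W a = p} = 0 := by
      have h := hd_ae; rw [Filter.EventuallyEq] at h; exact ae_iff.mp h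
    have hd1 : ∀ᵐ z ∂P, degFn W z.1 = p := by
      refine ae_iff.mpr ?_
      have hset : {z : ℝ × ℝ | ¬ degFn W z.1 = p}
          = {a | ¬ degFn W a = p} ×ˢ (Set.univ : Set ℝ) := by ext z; simp
      rw [hP, hset, Measure.prod_prod, hdnull, zero_mul]
    have hd2 : ∀ᵐ z ∂P, degFn W z.2 = p := by
      refine ae_iff.mpr ?_
      have hset : {z : ℝ × ℝ | ¬ degFn W z.2 = p}
          = (Set.univ : Set ℝ) ×ˢ {a | ¬ degFn W a = p} := by ext z; simp
      rw [hP, hset, Measure.prod_prod, hdnull, mul_zero]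
    filter_upwards [hG_ae, hd1, hd2] with z h1 h2 h3
    have h1' : gFn W z.1 z.2 = p ^ 2 := h1
    rw [hK_eq, h1', h2, h3]
    ring
    -- |W - p| ≤ 1
  have hub : ∀ x y, |W x y - p| ≤ 1 := fun x y =>
    abs_le.mpr ⟨by linarith [(hbd x y).1], by linarith [(hbd x y).2]⟩
  have hum : Measurable (Function.uncurry fun a b => W a b - p) := hm.sub measurable_const
  -- rectangle step
  have hrect : ∀ A B : Set ℝ, MeasurableSet A → MeasurableSet B →
      (∫ z in A ×ˢ B, (W z.1 z.2 - p) ∂P) = 0 := by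
    intro A B hA hB
    set ν := μ01.restrict A with hν
    have hν1 : ν Set.univ ≤ 1 := by
      rw [hν, Measure.restrict_apply_univ]; exact prob_le_one
    have hVsm : StronglyMeasurable (fun b => ∫ a, W a b - p ∂ν) :=
      StronglyMeasurable.integral_prod_left hum.stronglyMeasurable
    have hVb : ∀ b, |∫ a, W a b - p ∂ν| ≤ 1 := fun b => abs_int_le_one hν1 fun a => hub a b
    have e1 : ∀ a, (∫ b, (W a b - p) * (∫ c, W c b - p ∂ν) ∂μ01)
        = ∫ c, ∫ b, (W a b - p) * (W c b - p) ∂μ01 ∂ν := by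
      intro a
      have hFm : Measurable (Function.uncurry fun b c => (W a b - p) * (W c b - p)) :=
        (((meas_slice hm a).comp measurable_fst).sub measurable_const).mul
          ((hm.comp (measurable_snd.prodMk measurable_fst)).sub measurable_const)
      have hFb : ∀ b c, |(W a b - p) * (W c b - p)| ≤ 1 := fun b c => by
        rw [abs_mul]; exact mul_le_one₀ (hub a b) (abs_nonneg _) (hub c b)
      calc (∫ b, (W a b - p) * (∫ c, W c b - p ∂ν) ∂μ01)
          = ∫ b, ∫ c, (W a b - p) * (W c b - p) ∂ν ∂μ01 := by
            refine integral_congr_ae (.of_forall fun b => ?_)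
            dsimp only
            rw [integral_const_mul]
        _ = ∫ c, ∫ b, (W a b - p) * (W c b - p) ∂μ01 ∂ν := swap_bdd hFm hFb
    have e2 : (∫ b, (∫ a, W a b - p ∂ν) ^ 2 ∂μ01)
        = ∫ a, ∫ c, ∫ b, (W a b - p) * (W c b - p) ∂μ01 ∂ν ∂ν := by
      have hGm : Measurable (Function.uncurry fun a b => (W a b - p) * (∫ c, W c b - p ∂ν)) :=
        (hm.sub measurable_const).mul (hVsm.measurable.comp measurable_snd)
      have hGb' : ∀ a b, |(W a b - p) * (∫ c, W c b - p ∂ν)| ≤ 1 := fun a b => by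
        rw [abs_mul]; exact mul_le_one₀ (hub a b) (abs_nonneg _) (hVb b)
      calc (∫ b, (∫ a, W a b - p ∂ν) ^ 2 ∂μ01)
          = ∫ b, ∫ a, (W a b - p) * (∫ c, W c b - p ∂ν) ∂ν ∂μ01 := by
            refine integral_congr_ae (.of_forall fun b => ?_)
            dsimp only
            rw [integral_mul_const, pow_two]
        _ = ∫ a, ∫ b, (W a b - p) * (∫ c, W c b - p ∂ν) ∂μ01 ∂ν :=
            (swap_bdd hGm hGb').symm
        _ = ∫ a, ∫ c, ∫ b, (W a b - p) * (W c b - p) ∂μ01 ∂ν ∂ν := by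
            refine integral_congr_ae (.of_forall fun a => ?_)
            dsimp only
            exact e1 a
    have hKsm : StronglyMeasurable (fun z : ℝ × ℝ => K z.1 z.2) := by
      have h : Measurable (fun q : (ℝ × ℝ) × ℝ => (W q.1.1 q.2 - p) * (W q.1.2 q.2 - p)) :=
        ((hm.comp ((measurable_fst.fst).prodMk measurable_snd)).sub measurable_const).mul
          ((hm.comp ((measurable_fst.snd).prodMk measurable_snd)).sub measurable_const)
      exact StronglyMeasurable.integral_prod_right' h.stronglyMeasurable
    have hKb : ∀ a c, |K a c| ≤ 1 := fun a c =>
      abs_int_le_one (le_of_eq measure_univ) fun b => by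
        rw [abs_mul]; exact mul_le_one₀ (hub a b) (abs_nonneg _) (hub c b)
    have hKint0 : (∫ a, ∫ c, ∫ b, (W a b - p) * (W c b - p) ∂μ01 ∂ν ∂ν) = 0 := by
      have hint : Integrable (fun z : ℝ × ℝ => K z.1 z.2) (ν.prod ν) :=
        bddInt hKsm.aestronglyMeasurable (C := 1) fun z => hKb z.1 z.2
      have hpr := integral_prod _ hint
      have : (∫ a, ∫ c, ∫ b, (W a b - p) * (W c b - p) ∂μ01 ∂ν ∂ν)
          = ∫ z, K z.1 z.2 ∂(ν.prod ν) := hpr.symm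
      rw [this, hν, Measure.prod_restrict]
      refine integral_eq_zero_of_ae ?_
      have h := ae_restrict_of_ae (s := A ×ˢ A) hK_ae
      exact h.mono fun z hz => hz
    have hV0 : (∫ b, (∫ a, W a b - p ∂ν) ^ 2 ∂μ01) = 0 := by rw [e2, hKint0]
    have hV2sm : AEStronglyMeasurable (fun b => (∫ a, W a b - p ∂ν) ^ 2) μ01 := by
      have h := (hVsm.aestronglyMeasurable (μ := μ01)).mul (hVsm.aestronglyMeasurable (μ := μ01))
      have h' : AEStronglyMeasurable (fun b => (∫ a, W a b - p ∂ν) * (∫ a, W a b - p ∂ν)) μ01 := h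
      simpa [pow_two] using h'
    have hVint2 : Integrable (fun b => (∫ a, W a b - p ∂ν) ^ 2) μ01 :=
      bddInt hV2sm (C := 1) fun b => by
        rw [abs_pow]; exact pow_le_one₀ (abs_nonneg _) (hVb b)
    have hVae : ∀ᵐ b ∂μ01, (∫ a, W a b - p ∂ν) = 0 := by
      have h := (integral_eq_zero_iff_of_nonneg (fun b => sq_nonneg _) hVint2).mp hV0
      filter_upwards [h] with b hb
      have hb' : (∫ a, W a b - p ∂ν) ^ 2 = 0 := hb
      exact pow_eq_zero_iff (n := 2) (by norm_num) |>.mp hb'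
    -- conclude for the rectangle
    have hPr : P.restrict (A ×ˢ B) = ν.prod (μ01.restrict B) := by
      rw [hP, hν, Measure.prod_restrict]
    have hint2 : Integrable (fun z : ℝ × ℝ => W z.1 z.2 - p) (ν.prod (μ01.restrict B)) :=
      bddInt (hm.sub measurable_const).aestronglyMeasurable (C := 1) fun z => hub z.1 z.2
    calc (∫ z in A ×ˢ B, (W z.1 z.2 - p) ∂P)
        = ∫ z, (W z.1 z.2 - p) ∂(ν.prod (μ01.restrict B)) := by rw [hPr]
      _ = ∫ a, ∫ b, (W a b - p) ∂(μ01.restrict B) ∂ν := integral_prod _ hint2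
      _ = ∫ b, ∫ a, (W a b - p) ∂ν ∂(μ01.restrict B) := swap_bdd hum fun x y => hub x y
      _ = 0 := integral_eq_zero_of_ae ((ae_restrict_of_ae hVae).mono fun b hb => hb)
  -- measure extensionality
  have hu'int : Integrable (fun z : ℝ × ℝ => W z.1 z.2 - p) P :=
    bddInt (hm.sub measurable_const).aestronglyMeasurable (C := 1) fun z => hub z.1 z.2
  set ρp := P.withDensity fun z => ENNReal.ofReal (W z.1 z.2 - p) with hρp
  set ρm := P.withDensity fun z => ENNReal.ofReal (-(W z.1 z.2 - p)) with hρm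
  have hbound1 : ∀ s : Set (ℝ × ℝ), (∫⁻ z in s, ENNReal.ofReal (W z.1 z.2 - p) ∂P) ≤ 1 := by
    intro s
    calc (∫⁻ z in s, ENNReal.ofReal (W z.1 z.2 - p) ∂P) ≤ ∫⁻ _ in s, 1 ∂P :=
        lintegral_mono fun z => ENNReal.ofReal_le_one.mpr (by linarith [(hbd z.1 z.2).2])
      _ = P s := by simp
      _ ≤ 1 := prob_le_one
  have hbound2 : ∀ s : Set (ℝ × ℝ), (∫⁻ z in s, ENNReal.ofReal (-(W z.1 z.2 - p)) ∂P) ≤ 1 := by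
    intro s
    calc (∫⁻ z in s, ENNReal.ofReal (-(W z.1 z.2 - p)) ∂P) ≤ ∫⁻ _ in s, 1 ∂P :=
        lintegral_mono fun z => ENNReal.ofReal_le_one.mpr (by linarith [(hbd z.1 z.2).1])
      _ = P s := by simp
      _ ≤ 1 := prob_le_one
  haveI hfp : IsFiniteMeasure ρp := by
    refine ⟨?_⟩
    rw [hρp, withDensity_apply _ MeasurableSet.univ]
    exact lt_of_le_of_lt (hbound1 _) ENNReal.one_lt_top
  haveI hfm : IsFiniteMeasure ρm := by
    refine ⟨?_⟩
    rw [hρm, withDensity_apply _ MeasurableSet.univ]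
    exact lt_of_le_of_lt (hbound2 _) ENNReal.one_lt_top
  have hkey : ∀ s : Set (ℝ × ℝ), MeasurableSet s →
      (∫ z in s, (W z.1 z.2 - p) ∂P) = (ρp s).toReal - (ρm s).toReal := by
    intro s hs
    rw [hρp, hρm, withDensity_apply _ hs, withDensity_apply _ hs]
    exact integral_eq_lintegral_pos_part_sub_lintegral_neg_part (hu'int.restrict (s := s))
  have hrect' : ∀ s ∈ Set.image2 (· ×ˢ ·) {s : Set ℝ | MeasurableSet s}
      {t : Set ℝ | MeasurableSet t}, ρp s = ρm s := by
    rintro s ⟨A, hA, B, hB, rfl⟩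
    have hA' : MeasurableSet A := hA
    have hB' : MeasurableSet B := hB
    have h0 := hrect A B hA' hB'
    have hk := hkey _ (hA'.prod hB')
    rw [h0] at hk
    have hfin1 : ρp (A ×ˢ B) ≠ ⊤ := by
      rw [hρp, withDensity_apply _ (hA'.prod hB')]
      exact (lt_of_le_of_lt (hbound1 _) ENNReal.one_lt_top).ne
    have hfin2 : ρm (A ×ˢ B) ≠ ⊤ := by
      rw [hρm, withDensity_apply _ (hA'.prod hB')]
      exact (lt_of_le_of_lt (hbound2 _) ENNReal.one_lt_top).ne
    have ht : (ρp (A ×ˢ B)).toReal = (ρm (A ×ˢ B)).toReal := by linarith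
    exact (ENNReal.toReal_eq_toReal_iff' hfin1 hfin2).mp ht
  have hext : ρp = ρm := by
    refine ext_of_generate_finite _ generateFrom_prod.symm isPiSystem_prod hrect' ?_
    exact hrect' Set.univ
      ⟨Set.univ, by simp, Set.univ, by simp, Set.univ_prod_univ⟩
  have hzero : ∀ s : Set (ℝ × ℝ), MeasurableSet s →
      (∫ z in s, (W z.1 z.2 - p) ∂P) = 0 := by
    intro s hs
    rw [hkey s hs, hext]
    ring
  have hu0 : (fun z : ℝ × ℝ => W z.1 z.2 - p) =ᵐ[P] 0 := by
    refine AEFinStronglyMeasurable.ae_eq_zero_of_forall_setIntegral_eq_zero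
      (fun s _ _ => hu'int.integrableOn) (fun s hs _ => hzero s hs) ?_
    exact aefinStronglyMeasurable_of_aemeasurable P (hm.sub measurable_const).aemeasurable
  filter_upwards [hu0] with z hz
  have hz' : W z.1 z.2 - p = 0 := hz
  linarith

/-- if the edge density is `p` and `t(C₄, W) = p⁴`, then `W ≡ p`
almost everywhere (Chung–Graham–Wilson). -/
theorem stmt9 (W : ℝ → ℝ → ℝ) (hW : IsGraphon W) (p : ℝ)
    (hP1 : (∫ x, ∫ y, W x y ∂μ01 ∂μ01) = p)
    (hC4 : (∫ a, ∫ b, ∫ c, ∫ d, W a b * W b c * W c d * W d a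
      ∂μ01 ∂μ01 ∂μ01 ∂μ01) = p ^ 4) :
    ∀ᵐ z ∂(μ01.prod μ01), W z.1 z.2 = p :=
  stmt9' W hW.1 hW.2.1 hW.2.2 p hP1 hC4
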